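/- Let λ ∈ ℝ, λ ∉ {|ξ|² : ξ ∈ ℤ²}, and let x₀ = (α₁, α₂) ∈ ℝ² with d₁, d₂ ∈ ℂ, |d₁|² + |d₂|² = 1, |d₂|² ≥ 1/2. Suppose there exists ξ = (ξ₁, ξ₂) ∈ ℤ² with ξ₁ ≠ 0, | |ξ|² − λ | ≤ B, and |sin(ξ₁ α₁)| ≥ s > 0. Then Σ_{η ∈ ℤ²} |d₁ + d₂ e^{i⟨η, x₀⟩}|² / (|η|² − λ)² ≥ s²/(2B²). -/

import Mathlib

open Real Complex

private lemma aux_summable (lam : ℝ) {g : ℤ × ℤ → ℝ} (hg0 : ∀ η, 0 ≤ g η)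
    (hg2 : ∀ η, g η ≤ 2) :
    Summable fun η : ℤ × ℤ => g η / (((η.1 ^ 2 + η.2 ^ 2 : ℤ) : ℝ) - lam) ^ 2 := by
  obtain ⟨N, hN⟩ := exists_nat_ge (2 * |lam| + 2)
  set S : Finset (ℤ × ℤ) := Finset.Icc (-(N : ℤ), -(N : ℤ)) ((N : ℤ), (N : ℤ)) with hS
  have base : Summable fun η : ℤ × ℤ =>
      8 * ((max η.1.natAbs η.2.natAbs : ℕ) : ℝ) ^ (-4 : ℝ) := by
    have h := (EisensteinSeries.summable_one_div_norm_rpow (by norm_num : (2:ℝ) < 4)).mul_left 8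
    have h2 := ((finTwoArrowEquiv ℤ).symm.summable_iff
      (f := fun x : Fin 2 → ℤ => 8 * ‖x‖ ^ (-4 : ℝ))).mpr h
    apply h2.congr
    intro η
    simp [Function.comp, EisensteinSeries.norm_eq_max_natAbs]
  rw [← Finset.summable_compl_iff S]
  refine Summable.of_nonneg_of_le (fun η => div_nonneg (hg0 _) (sq_nonneg _)) ?_ (base.subtype _)
  rintro ⟨η, hη⟩
  simp only [hS, Finset.mem_Icc, Prod.le_def, not_and_or, not_le] at hη
  show g η / (((η.1 ^ 2 + η.2 ^ 2 : ℤ) : ℝ) - lam) ^ 2 ≤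
    8 * ((max η.1.natAbs η.2.natAbs : ℕ) : ℝ) ^ (-4 : ℝ)
  set M : ℕ := max η.1.natAbs η.2.natAbs with hM
  have hMN : (N : ℤ) + 1 ≤ (M : ℤ) := by
    have h1 : (η.1.natAbs : ℤ) ≤ M := by exact_mod_cast Nat.le_max_left _ _
    have h2 : (η.2.natAbs : ℤ) ≤ M := by exact_mod_cast Nat.le_max_right _ _
    omega
  have hMsq : ((M : ℤ)) ^ 2 ≤ η.1 ^ 2 + η.2 ^ 2 := by
    have e1 := Int.natAbs_mul_self' η.1
    have e2 := Int.natAbs_mul_self' η.2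
    have hch : (M : ℤ) = η.1.natAbs ∨ (M : ℤ) = η.2.natAbs := by
      rcases max_choice η.1.natAbs η.2.natAbs with h | h <;> simp [hM, h]
    rcases hch with h | h <;> rw [h] <;> nlinarith [sq_nonneg η.1, sq_nonneg η.2]
  set n : ℝ := ((η.1 ^ 2 + η.2 ^ 2 : ℤ) : ℝ) with hn
  set Mr : ℝ := (M : ℝ) with hMr
  have hMrN : (N : ℝ) + 1 ≤ Mr := by rw [hMr]; exact_mod_cast hMN
  have hMn : Mr ^ 2 ≤ n := by rw [hMr, hn]; exact_mod_cast hMsq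
  have hNnn : (0:ℝ) ≤ N := Nat.cast_nonneg N
  have habs : 2 * |lam| + 2 ≤ n := by nlinarith [abs_nonneg lam]
  have hDge : Mr ^ 2 / 2 ≤ n - lam := by nlinarith [le_abs_self lam, neg_abs_le lam]
  have hMrpos : (0:ℝ) < Mr := by linarith
  have hDpos : (0:ℝ) < n - lam := by nlinarith
  have hrpow : Mr ^ (-4 : ℝ) = (Mr ^ (4:ℕ))⁻¹ := by
    rw [show (-4 : ℝ) = -((4:ℕ):ℝ) by norm_num, Real.rpow_neg hMrpos.le, Real.rpow_natCast]
  rw [hrpow]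
  calc g η / (n - lam) ^ 2 ≤ 2 / (n - lam) ^ 2 :=
        div_le_div₀ (by norm_num) (hg2 η) (by positivity) le_rfl
    _ ≤ 8 * (Mr ^ (4:ℕ))⁻¹ := by
        rw [show (8:ℝ) * (Mr ^ (4:ℕ))⁻¹ = 8 / Mr ^ (4:ℕ) by ring,
          div_le_div_iff₀ (by positivity) (by positivity)]
        nlinarith [pow_le_pow_left₀ (show (0:ℝ) ≤ Mr ^ 2 / 2 by positivity) hDge 2]

set_option maxHeartbeats 1000000 in
/-- Lower bound for the L² mass of a combination of Green's functions: if some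
lattice point ξ with ξ₁ ≠ 0 has |ξ|² within B of λ and |sin(ξ₁α₁)| ≥ s, then
Σ_η |d₁ + d₂ e^{i⟨η,x₀⟩}|²/(|η|²−λ)² ≥ s²/(2B²). -/
theorem greens_lower_bound (lam α₁ α₂ B s : ℝ) (d₁ d₂ : ℂ)
    (hlam : ∀ ξ : ℤ × ℤ, ((ξ.1 ^ 2 + ξ.2 ^ 2 : ℤ) : ℝ) ≠ lam)
    (hnorm : ‖d₁‖ ^ 2 + ‖d₂‖ ^ 2 = 1)
    (hd₂ : (1 : ℝ) / 2 ≤ ‖d₂‖ ^ 2)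
    (hB : 0 < B) (hs : 0 < s) (ξ : ℤ × ℤ) (hξ₁ : ξ.1 ≠ 0)
    (hnear : |((ξ.1 ^ 2 + ξ.2 ^ 2 : ℤ) : ℝ) - lam| ≤ B)
    (hsin : s ≤ |Real.sin ((ξ.1 : ℝ) * α₁)|) :
    s ^ 2 / (2 * B ^ 2) ≤
      ∑' η : ℤ × ℤ,
        ‖d₁ + d₂ * Complex.exp (Complex.I * ((η.1 : ℝ) * α₁ + (η.2 : ℝ) * α₂))‖ ^ 2 /
          (((η.1 ^ 2 + η.2 ^ 2 : ℤ) : ℝ) - lam) ^ 2 := by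
  set f : ℤ × ℤ → ℝ := fun η =>
    ‖d₁ + d₂ * Complex.exp (Complex.I * ((η.1 : ℝ) * α₁ + (η.2 : ℝ) * α₂))‖ ^ 2 /
      (((η.1 ^ 2 + η.2 ^ 2 : ℤ) : ℝ) - lam) ^ 2 with hf
  have habs1 : ∀ z : ℂ, z.im = 0 → ‖Complex.exp (Complex.I * z)‖ = 1 := by
    intro z hz
    rw [Complex.norm_exp]
    simp [Complex.mul_re, hz]
  have hg2 : ∀ η : ℤ × ℤ, ‖d₁ + d₂ * Complex.exp (Complex.I * ((η.1 : ℝ) * α₁ + (η.2 : ℝ) * α₂))‖ ^ 2 ≤ 2 := by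
    intro η
    have h1 : ‖d₁ + d₂ * Complex.exp (Complex.I * ((η.1 : ℝ) * α₁ + (η.2 : ℝ) * α₂))‖
        ≤ ‖d₁‖ + ‖d₂‖ := by
      calc ‖d₁ + d₂ * Complex.exp (Complex.I * ((η.1 : ℝ) * α₁ + (η.2 : ℝ) * α₂))‖
          ≤ ‖d₁‖ + ‖d₂ * Complex.exp
            (Complex.I * ((η.1 : ℝ) * α₁ + (η.2 : ℝ) * α₂))‖ := norm_add_le _ _
        _ = ‖d₁‖ + ‖d₂‖ := by
            rw [norm_mul, habs1, mul_one]
            simp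
    nlinarith [norm_nonneg (d₁ + d₂ * Complex.exp
        (Complex.I * ((η.1 : ℝ) * α₁ + (η.2 : ℝ) * α₂))),
      norm_nonneg d₁, norm_nonneg d₂, sq_nonneg (‖d₁‖ - ‖d₂‖)]
  have hsum : Summable f := aux_summable lam (fun η => by positivity) hg2
  set ξ' : ℤ × ℤ := (-ξ.1, ξ.2) with hξ'
  have hne : ξ ≠ ξ' := by
    intro h
    have h1 : ξ.1 = -ξ.1 := congrArg Prod.fst h
    omega
  have hsub : f ξ + f ξ' ≤ ∑' η, f η := by
    have h := Summable.sum_le_tsum ({ξ, ξ'} : Finset (ℤ × ℤ)) (fun i _ => by positivity) hsum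
    rwa [Finset.sum_pair hne] at h
  refine le_trans ?_ hsub
  -- notation
  set a : ℝ := (ξ.1 : ℝ) * α₁ with ha
  set b : ℝ := (ξ.2 : ℝ) * α₂ with hb
  set D : ℝ := ((ξ.1 ^ 2 + ξ.2 ^ 2 : ℤ) : ℝ) - lam with hD
  set u : ℂ := d₁ + d₂ * Complex.exp (Complex.I * ((a : ℂ) + (b : ℂ))) with hu
  set v : ℂ := d₁ + d₂ * Complex.exp (Complex.I * (-(a : ℂ) + (b : ℂ))) with hv
  have hfξ : f ξ = ‖u‖ ^ 2 / D ^ 2 := by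
    simp only [hf, hu, hD, ha, hb]
    push_cast
    ring_nf
  have hfξ' : f ξ' = ‖v‖ ^ 2 / D ^ 2 := by
    simp only [hf, hv, hD, ha, hb, hξ']
    push_cast
    ring_nf
  have hDne : D ≠ 0 := sub_ne_zero.mpr (hlam ξ)
  have hD2pos : (0:ℝ) < D ^ 2 := lt_of_le_of_ne (sq_nonneg D) (Ne.symm (pow_ne_zero 2 hDne))
  have hD2B : D ^ 2 ≤ B ^ 2 := by
    rw [← _root_.sq_abs D]
    exact pow_le_pow_left₀ (abs_nonneg D) hnear 2
  -- the difference
  have hE : Complex.exp (Complex.I * ((a : ℂ) + (b : ℂ))) -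
      Complex.exp (Complex.I * (-(a : ℂ) + (b : ℂ))) =
      Complex.exp (Complex.I * (b : ℂ)) * (2 * (Real.sin a : ℂ) * Complex.I) := by
    rw [show Complex.I * ((a : ℂ) + (b : ℂ)) = (a : ℂ) * Complex.I + (b : ℂ) * Complex.I by ring,
      show Complex.I * (-(a : ℂ) + (b : ℂ)) = (-(a : ℂ)) * Complex.I + (b : ℂ) * Complex.I by ring,
      Complex.exp_add, Complex.exp_add, Complex.exp_mul_I, Complex.exp_mul_I,
      Complex.exp_mul_I, Complex.cos_neg, Complex.sin_neg, Complex.ofReal_sin,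
      show Complex.I * (b : ℂ) = (b : ℂ) * Complex.I by ring, Complex.exp_mul_I]
    ring
  have hsubuv : ‖u - v‖ = ‖d₂‖ * (2 * |Real.sin a|) := by
    have : u - v = d₂ * (Complex.exp (Complex.I * ((a : ℂ) + (b : ℂ))) -
        Complex.exp (Complex.I * (-(a : ℂ) + (b : ℂ)))) := by rw [hu, hv]; ring
    rw [this, hE, norm_mul, norm_mul, norm_mul, norm_mul, habs1 ((b : ℝ) : ℂ) (by simp), Complex.norm_I,
      Complex.norm_real, Real.norm_eq_abs, Complex.norm_two]
    ring
  have htri : ‖u - v‖ ≤ ‖u‖ + ‖v‖ := by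
    have := norm_sub_le u v
    simpa using this
  have hsin2 : s ^ 2 ≤ Real.sin a ^ 2 := by
    rw [← _root_.sq_abs (Real.sin a)]
    exact pow_le_pow_left₀ hs.le hsin 2
  have h1 : ‖d₂‖ * (2 * |Real.sin a|) ≤ ‖u‖ + ‖v‖ :=
    hsubuv ▸ htri
  have hprod : 1 / 2 * s ^ 2 ≤ ‖d₂‖ ^ 2 * Real.sin a ^ 2 := by
    nlinarith [hsin2, hd₂, sq_nonneg s, sq_nonneg (Real.sin a)]
  have hnum : s ^ 2 ≤ ‖u‖ ^ 2 + ‖v‖ ^ 2 := by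
    nlinarith [mul_self_le_mul_self
        (mul_nonneg (norm_nonneg d₂) (by positivity)) h1,
      hprod, sq_nonneg (‖u‖ - ‖v‖), _root_.sq_abs (Real.sin a)]
  rw [hfξ, hfξ', ← add_div]
  exact div_le_div₀ (by positivity) hnum (by positivity) (by nlinarith [sq_nonneg B])
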